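/- If p is a prime with p ≡ 2 (mod 5) and q = 4p + 1 is also prime, then 10 is a primitive root modulo q, i.e., the multiplicative order of 10 modulo q equals q - 1. -/
import Mathlib

theorem aux_two_ne : ((2 : ℤ) : ZMod 5) ≠ 0 := by decide

theorem aux_div (p d : ℕ) (hp : p.Prime) (hdvd : d ∣ 4 * p)
    (hnot2p : ¬ d ∣ 2 * p) (hnot4 : d ≠ 4) : d = 4 * p := by
  by_cases hpd : p ∣ d
  · obtain ⟨e, hde⟩ := hpd
    subst hde
    have he4 : e ∣ 4 := by
      have h := hdvd
      rw [show 4 * p = p * 4 by ring] at h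
      exact (Nat.mul_dvd_mul_iff_left hp.pos).mp h
    have hele : e ≤ 4 := Nat.le_of_dvd (by norm_num) he4
    interval_cases e
    · exact absurd he4 (by norm_num)
    · exact absurd (⟨2, by ring⟩ : p * 1 ∣ 2 * p) hnot2p
    · exact absurd (⟨1, by ring⟩ : p * 2 ∣ 2 * p) hnot2p
    · exact absurd he4 (by norm_num)
    · ring
  · have hcop : Nat.Coprime d p := ((Nat.Prime.coprime_iff_not_dvd hp).mpr hpd).symm
    have hd4 : d ∣ 4 := hcop.dvd_of_dvd_mul_right hdvd
    have : d ≤ 4 := Nat.le_of_dvd (by norm_num) hd4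
    interval_cases d
    · exact absurd hd4 (by norm_num)
    · exact absurd (⟨2 * p, by ring⟩ : 1 ∣ 2 * p) hnot2p
    · exact absurd (⟨p, rfl⟩ : 2 ∣ 2 * p) hnot2p
    · exact absurd hd4 (by norm_num)
    · exact absurd rfl hnot4

theorem stmt_1 (p : ℕ) (hp : p.Prime) (hp5 : p % 5 = 2)
    (hq : (4 * p + 1).Prime) :
    orderOf (10 : ZMod (4 * p + 1)) = (4 * p + 1) - 1 := by
  set q := 4 * p + 1 with hqdef
  haveI : Fact q.Prime := ⟨hq⟩
  haveI : Fact (Nat.Prime 5) := ⟨by norm_num⟩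
  have hp2 : p ≠ 2 := by rintro rfl; norm_num at hq
  have hpodd : p % 2 = 1 := hp.eq_two_or_odd.resolve_left hp2
  have hp3 : 3 ≤ p := by have := hp.two_le; omega
  have hq13 : 13 ≤ q := by omega
  have hq8 : q % 8 = 5 := by omega
  have hq5 : q % 5 = 4 := by omega
  have hqne2 : q ≠ 2 := by omega
  haveI : Fact (2 < q) := ⟨by omega⟩
  -- 2 is a nonresidue mod q
  have h2 : legendreSym q 2 = -1 := by
    rw [legendreSym.at_two hqne2]
    have hcast : (q : ZMod 8) = 5 := by
      rw [← ZMod.natCast_mod q 8, hq8]; rfl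
    rw [hcast]; decide
  -- 5 is a residue mod q
  have h5 : legendreSym q 5 = 1 := by
    have hrec := legendreSym.quadratic_reciprocity_one_mod_four (p := 5) (q := q)
      (by norm_num) hqne2
    have hm : ((q : ℤ) % ((5 : ℕ) : ℤ)) = 4 := by push_cast; omega
    rw [legendreSym.mod 5 q, hm] at hrec
    rw [show (5 : ℤ) = ((5 : ℕ) : ℤ) by norm_num, hrec,
      show (4 : ℤ) = 2 ^ 2 by norm_num]
    exact legendreSym.sq_one' 5 aux_two_ne
  have h10 : legendreSym q 10 = -1 := by
    rw [show (10 : ℤ) = 2 * 5 by norm_num, legendreSym.mul, h2, h5]; ring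
  -- Euler's criterion: 10^(2p) = -1
  have he := legendreSym.eq_pow q 10
  rw [h10] at he
  have hq2 : q / 2 = 2 * p := by omega
  rw [hq2] at he
  push_cast at he
  have hne : (10 : ZMod q) ^ (2 * p) = -1 := he.symm
  have hneg : (-1 : ZMod q) ≠ 1 := ZMod.neg_one_ne_one
  -- order divides 4p
  have h100 : (10 : ZMod q) ≠ 0 := by
    intro h
    have : ((10 : ℕ) : ZMod q) = 0 := by push_cast; exact h
    have := (ZMod.natCast_eq_zero_iff 10 q).mp this
    have := Nat.le_of_dvd (by norm_num) this
    omega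
  have hdvd : orderOf (10 : ZMod q) ∣ 4 * p := by
    apply orderOf_dvd_of_pow_eq_one
    have := ZMod.pow_card_sub_one_eq_one h100
    rwa [show q - 1 = 4 * p by omega] at this
  have hnot2p : ¬ orderOf (10 : ZMod q) ∣ 2 * p := by
    intro h
    have := orderOf_dvd_iff_pow_eq_one.mp h
    rw [hne] at this
    exact hneg this
  have hnot4 : orderOf (10 : ZMod q) ≠ 4 := by
    intro h4
    have hpow : (10 : ZMod q) ^ 4 = 1 := by
      rw [← h4]; exact pow_orderOf_eq_one _
    have h0 : ((9999 : ℕ) : ZMod q) = 0 := by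
      push_cast
      linear_combination hpow
    have hdq : q ∣ 9999 := (ZMod.natCast_eq_zero_iff 9999 q).mp h0
    rw [show (9999 : ℕ) = 3 * (3 * (11 * 101)) by norm_num] at hdq
    rcases (hq.dvd_mul.mp hdq) with h | h
    · have := (Nat.prime_dvd_prime_iff_eq hq (by norm_num)).mp h; omega
    rcases (hq.dvd_mul.mp h) with h | h
    · have := (Nat.prime_dvd_prime_iff_eq hq (by norm_num)).mp h; omega
    rcases (hq.dvd_mul.mp h) with h | h
    · have := (Nat.prime_dvd_prime_iff_eq hq (by norm_num)).mp h; omega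
    · have := (Nat.prime_dvd_prime_iff_eq hq (by norm_num)).mp h; omega
  have hgoal : orderOf (10 : ZMod q) = 4 * p :=
    aux_div p _ hp hdvd hnot2p hnot4
  rw [hgoal]; omega
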